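/- Let G be a connected simple graph with rad(G) = diam(G) = 2, and let G + u denote the join of G with a single new vertex u (u is adjacent to every vertex of G). Then the eccentricity matrix ε(G + u) has at least two positive eigenvalues. -/

import Mathlib

open Finset Polynomial

noncomputable def ecc {V : Type*} [Fintype V] (G : SimpleGraph V) (u : V) : ℕ :=
  Finset.univ.sup (G.dist u)

noncomputable def eccMatrix {V : Type*} [Fintype V] (G : SimpleGraph V) :
    Matrix V V ℝ := fun u v =>
  if G.dist u v = min (ecc G u) (ecc G v) then (G.dist u v : ℝ) else 0

theorem eccMatrix_isHermitian {V : Type*} [Fintype V] (G : SimpleGraph V) :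
    (eccMatrix G).IsHermitian := by
  unfold Matrix.IsHermitian
  ext u v
  simp only [Matrix.conjTranspose_apply, eccMatrix, star_trivial]
  rw [SimpleGraph.dist_comm, min_comm]

/-- Number of positive eigenvalues (with multiplicity) of a real symmetric matrix. -/
noncomputable def posEigCount {V : Type*} [Fintype V] [DecidableEq V]
    {A : Matrix V V ℝ} (hA : A.IsHermitian) : ℕ :=
  (Finset.univ.filter fun i => 0 < hA.eigenvalues i).card

/-- The join of two simple graphs: disjoint union plus all edges in between. -/
def graphJoin {α β : Type*} (G : SimpleGraph α) (H : SimpleGraph β) :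
    SimpleGraph (α ⊕ β) where
  Adj x y := match x, y with
    | Sum.inl a, Sum.inl b => G.Adj a b
    | Sum.inr a, Sum.inr b => H.Adj a b
    | _, _ => True
  symm := ⟨by rintro (a|a) (b|b) h <;> first | exact G.adj_symm h | exact H.adj_symm h | trivial⟩
  loopless := ⟨by rintro (a|a) h <;> first | exact G.loopless.irrefl _ h | exact H.loopless.irrefl _ h⟩

/-- The disjoint union of two simple graphs. -/
def graphSum {α β : Type*} (G : SimpleGraph α) (H : SimpleGraph β) :
    SimpleGraph (α ⊕ β) where
  Adj x y := match x, y with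
    | Sum.inl a, Sum.inl b => G.Adj a b
    | Sum.inr a, Sum.inr b => H.Adj a b
    | _, _ => False
  symm := ⟨by rintro (a|a) (b|b) h <;> first | exact G.adj_symm h | exact H.adj_symm h | trivial⟩
  loopless := ⟨by rintro (a|a) h <;> first | exact G.loopless.irrefl _ h | exact H.loopless.irrefl _ h⟩

/-- Disjoint union of blocks indexed by `ι`; block `i` has `r i` vertices and is a
clique when `P i` holds and a coclique (independent set) otherwise. -/
def blocksGraph {ι : Type*} (r : ι → ℕ) (P : ι → Prop) :
    SimpleGraph (Σ i, Fin (r i)) where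
  Adj x y := x ≠ y ∧ x.1 = y.1 ∧ P x.1
  symm := ⟨by rintro x y ⟨h1, h2, h3⟩; exact ⟨h1.symm, h2.symm, h2 ▸ h3⟩⟩
  loopless := ⟨fun x h => h.1 rfl⟩

section EigLemma

open Matrix

variable {n : Type*} [Fintype n] [DecidableEq n]

lemma quadform_sum {A : Matrix n n ℝ} (hA : A.IsHermitian) (x y : n → ℝ) :
    x ⬝ᵥ A *ᵥ y = ∑ i, hA.eigenvalues i *
      ((star (hA.eigenvectorUnitary : Matrix n n ℝ)) *ᵥ x) i *
      ((star (hA.eigenvectorUnitary : Matrix n n ℝ)) *ᵥ y) i := by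
  set U := (hA.eigenvectorUnitary : Matrix n n ℝ) with hUdef
  have h1 : A *ᵥ y
      = U *ᵥ (Matrix.diagonal (RCLike.ofReal ∘ hA.eigenvalues) *ᵥ (star U *ᵥ y)) := by
    rw [Matrix.mulVec_mulVec, Matrix.mulVec_mulVec]
    conv_lhs => rw [hA.spectral_theorem, Unitary.conjStarAlgAut_apply]
  rw [h1, Matrix.dotProduct_mulVec]
  have h2 : x ᵥ* U = star U *ᵥ x := by
    funext i
    simp [Matrix.vecMul, Matrix.mulVec, dotProduct, Matrix.conjTranspose_apply, mul_comm]
  rw [h2]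
  simp only [dotProduct, Matrix.mulVec_diagonal, Function.comp_apply,
    RCLike.ofReal_real_eq_id, id_eq]
  exact Finset.sum_congr rfl fun i _ => by ring

lemma two_le_posEigCount {A : Matrix n n ℝ} (hA : A.IsHermitian) (x y : n → ℝ)
    (hx : 0 < x ⬝ᵥ A *ᵥ x)
    (hdet : (x ⬝ᵥ A *ᵥ y) ^ 2 < (x ⬝ᵥ A *ᵥ x) * (y ⬝ᵥ A *ᵥ y)) :
    2 ≤ posEigCount hA := by
  by_contra hcon
  push_neg at hcon
  have hcard : (Finset.univ.filter fun i => 0 < hA.eigenvalues i).card ≤ 1 :=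
    Nat.lt_succ_iff.mp hcon
  have hne : Nonempty n := by
    rcases isEmpty_or_nonempty n with h | h
    · exfalso
      rw [dotProduct] at hx
      simp at hx
    · exact h
  obtain ⟨i₀, hi₀⟩ : ∃ i₀, ∀ j, j ≠ i₀ → hA.eigenvalues j ≤ 0 := by
    by_cases hfe : (Finset.univ.filter fun i => 0 < hA.eigenvalues i).Nonempty
    · obtain ⟨i₀, hi₀⟩ := hfe
      refine ⟨i₀, fun j hj => ?_⟩
      by_contra hp
      push_neg at hp
      exact hj (Finset.card_le_one.mp hcard j
        (Finset.mem_filter.mpr ⟨Finset.mem_univ _, hp⟩) i₀ hi₀)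
    · refine ⟨Classical.arbitrary n, fun j _ => ?_⟩
      by_contra hp
      push_neg at hp
      exact hfe ⟨j, Finset.mem_filter.mpr ⟨Finset.mem_univ _, hp⟩⟩
  set lam := hA.eigenvalues with hlam
  set p := (star (hA.eigenvectorUnitary : Matrix n n ℝ)) *ᵥ x with hp
  set q := (star (hA.eigenvectorUnitary : Matrix n n ℝ)) *ᵥ y with hq
  have hX : x ⬝ᵥ A *ᵥ x = ∑ i, lam i * p i * p i := quadform_sum hA x x
  have hY : y ⬝ᵥ A *ᵥ y = ∑ i, lam i * q i * q i := quadform_sum hA y y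
  have hW : x ⬝ᵥ A *ᵥ y = ∑ i, lam i * p i * q i := quadform_sum hA x y
  have key : ∀ r : n → ℝ, r i₀ = 0 → ∑ i, lam i * r i * r i ≤ 0 := by
    intro r hr
    apply Finset.sum_nonpos
    intro i _
    rcases eq_or_ne i i₀ with h | h
    · subst h; simp [hr]
    · have h1 : lam i * r i * r i = lam i * (r i) ^ 2 := by ring
      rw [h1]
      exact mul_nonpos_of_nonpos_of_nonneg (hi₀ i h) (sq_nonneg _)
  set α := q i₀ with hα
  set β := p i₀ with hβ
  have hZ : α ^ 2 * (x ⬝ᵥ A *ᵥ x) - 2 * α * β * (x ⬝ᵥ A *ᵥ y)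
      + β ^ 2 * (y ⬝ᵥ A *ᵥ y) ≤ 0 := by
    have hkey := key (fun i => α * p i - β * q i) (by show α * p i₀ - β * q i₀ = 0; rw [hα, hβ]; ring)
    have hexp : ∑ i, lam i * (α * p i - β * q i) * (α * p i - β * q i)
        = α ^ 2 * (∑ i, lam i * p i * p i) - 2 * α * β * (∑ i, lam i * p i * q i)
          + β ^ 2 * (∑ i, lam i * q i * q i) := by
      rw [Finset.mul_sum, Finset.mul_sum, Finset.mul_sum, ← Finset.sum_sub_distrib,
        ← Finset.sum_add_distrib]
      exact Finset.sum_congr rfl fun i _ => by ring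
    rw [hX, hY, hW, ← hexp]
    exact hkey
  by_cases hb0 : β = 0
  · by_cases ha0 : α = 0
    · have hXle := key p hb0
      rw [← hX] at hXle
      linarith
    · rw [hb0] at hZ
      have h2 : 0 < α ^ 2 := by positivity
      nlinarith
  · have h2 : 0 < β ^ 2 := by positivity
    nlinarith [sq_nonneg (α * (x ⬝ᵥ A *ᵥ x) - β * (x ⬝ᵥ A *ᵥ y)),
      mul_pos h2 (sub_pos.mpr hdet), mul_pos hx hx]

end EigLemma

section GraphLemma

set_option linter.unusedSectionVars false

variable {V : Type*} [Fintype V] [DecidableEq V] (G : SimpleGraph V)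

local notation "H" => graphJoin G (⊤ : SimpleGraph Unit)

lemma hadj1 (v : V) : (H).Adj (Sum.inl v) (Sum.inr ()) := trivial

lemma hadj2 (v : V) : (H).Adj (Sum.inr ()) (Sum.inl v) := trivial

/-- the two-step walk through the apex. -/
def thruWalk (v w : V) : (H).Walk (Sum.inl v) (Sum.inl w) :=
  .cons (hadj1 G v) (.cons (hadj2 G w) .nil)

lemma join_dist_le_two (v w : V) : (H).dist (Sum.inl v) (Sum.inl w) ≤ 2 :=
  SimpleGraph.dist_le (thruWalk G v w)

lemma join_dist_eq_two {v w : V} (hne : v ≠ w) (hnadj : ¬ G.Adj v w) :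
    (H).dist (Sum.inl v) (Sum.inl w) = 2 := by
  have h2 := join_dist_le_two G v w
  have h0 : (H).dist (Sum.inl v) (Sum.inl w) ≠ 0 :=
    SimpleGraph.dist_ne_zero_iff_ne_and_reachable.mpr
      ⟨by simpa using hne, ⟨thruWalk G v w⟩⟩
  have h1 : (H).dist (Sum.inl v) (Sum.inl w) ≠ 1 := by
    rw [ne_eq, SimpleGraph.dist_eq_one_iff_adj]
    exact hnadj
  omega

lemma join_dist_adj {v w : V} (hadj : G.Adj v w) :
    (H).dist (Sum.inl v) (Sum.inl w) = 1 :=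
  SimpleGraph.dist_eq_one_iff_adj.mpr hadj

lemma join_dist_apex (v : V) : (H).dist (Sum.inl v) (Sum.inr ()) = 1 :=
  SimpleGraph.dist_eq_one_iff_adj.mpr (hadj1 G v)

lemma join_ecc_inl {v w : V} (hne : v ≠ w) (hnadj : ¬ G.Adj v w) :
    ecc (H) (Sum.inl v) = 2 := by
  apply le_antisymm
  · apply Finset.sup_le
    rintro (b | b) _
    · exact join_dist_le_two G v b
    · cases b
      rw [join_dist_apex]
      omega
  · calc 2 = (H).dist (Sum.inl v) (Sum.inl w) := (join_dist_eq_two G hne hnadj).symm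
      _ ≤ _ := Finset.le_sup (Finset.mem_univ _)

lemma dist_two_facts {v w : V} (h : G.dist v w = 2) : v ≠ w ∧ ¬ G.Adj v w := by
  constructor
  · rintro rfl
    rw [SimpleGraph.dist_self] at h
    omega
  · intro hadj
    have := SimpleGraph.dist_eq_one_iff_adj.mpr hadj
    omega

end GraphLemma

/-- if `G` is connected with radius = diameter = 2, then the join of `G`
with one new vertex has at least two positive eccentricity eigenvalues. -/
theorem stmt4 {V : Type*} [Fintype V] [DecidableEq V] (G : SimpleGraph V)
    (hconn : G.Connected) (hdiam : Finset.univ.sup (ecc G) = 2)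
    (hrad : sInf (Set.range (ecc G)) = 2) :
    2 ≤ posEigCount (eccMatrix_isHermitian (graphJoin G (⊤ : SimpleGraph Unit))) := by
  classical
  have hV : Nonempty V := by
    rcases isEmpty_or_nonempty V with h | h
    · rw [Finset.univ_eq_empty, Finset.sup_empty] at hdiam
      exact absurd hdiam (by norm_num)
    · exact h
  -- every vertex has eccentricity 2 in G
  have hecc : ∀ v, ecc G v = 2 := fun v =>
    le_antisymm ((Finset.le_sup (Finset.mem_univ v)).trans hdiam.le)
      (hrad ▸ Nat.sInf_le ⟨v, rfl⟩)
  -- every vertex has a vertex at distance exactly 2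
  have hfar : ∀ v : V, ∃ w, G.dist v w = 2 := by
    intro v
    obtain ⟨w, -, hw⟩ :=
      Finset.exists_mem_eq_sup Finset.univ Finset.univ_nonempty (G.dist v)
    exact ⟨w, by rw [← hw]; exact hecc v⟩
  -- pick v, w at distance 2
  obtain ⟨v, w, hvw⟩ : ∃ v w, G.dist v w = 2 := ⟨Classical.arbitrary V, hfar _⟩
  obtain ⟨hvw_ne, hvw_nadj⟩ := dist_two_facts G hvw
  -- middle vertex m
  obtain ⟨pw, hpw⟩ := hconn.exists_walk_length_eq_dist v w
  rw [hvw] at hpw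
  obtain ⟨m, hvm, hmw⟩ : ∃ m, G.Adj v m ∧ G.Adj m w := by
    cases pw with
    | nil => simp at hpw
    | cons h q =>
      rename_i m
      cases q with
      | nil => simp at hpw
      | cons h' q' =>
        cases q' with
        | nil => exact ⟨m, h, h'⟩
        | cons h'' q'' => simp [SimpleGraph.Walk.length_cons] at hpw
  -- a vertex d at distance 2 from m
  obtain ⟨d, hmd⟩ := hfar m
  obtain ⟨hmd_ne, hmd_nadj⟩ := dist_two_facts G hmd
  have hdv : d ≠ v := fun h => hmd_nadj (h ▸ hvm.symm)
  have hdw : d ≠ w := fun h => hmd_nadj (h ▸ hmw)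
  -- eccentricities in the join
  have heccH : ∀ a : V, ecc (graphJoin G (⊤ : SimpleGraph Unit)) (Sum.inl a) = 2 := by
    intro a
    obtain ⟨b, hab⟩ := hfar a
    obtain ⟨h1, h2⟩ := dist_two_facts G hab
    exact join_ecc_inl G h1 h2
  set M := eccMatrix (graphJoin G (⊤ : SimpleGraph Unit)) with hM
  have hentry : ∀ a b : V, M (Sum.inl a) (Sum.inl b) =
      if (graphJoin G (⊤ : SimpleGraph Unit)).dist (Sum.inl a) (Sum.inl b) = 2
        then 2 else 0 := by
    intro a b
    rw [hM]
    unfold eccMatrix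
    rw [heccH a, heccH b, min_self]
    split_ifs with h
    · rw [h]; norm_num
    · rfl
  -- specific entries
  have Mvv : M (Sum.inl v) (Sum.inl v) = 0 := by
    rw [hentry, if_neg]; rw [SimpleGraph.dist_self]; omega
  have Mww : M (Sum.inl w) (Sum.inl w) = 0 := by
    rw [hentry, if_neg]; rw [SimpleGraph.dist_self]; omega
  have Mmm : M (Sum.inl m) (Sum.inl m) = 0 := by
    rw [hentry, if_neg]; rw [SimpleGraph.dist_self]; omega
  have Mdd : M (Sum.inl d) (Sum.inl d) = 0 := by
    rw [hentry, if_neg]; rw [SimpleGraph.dist_self]; omega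
  have Mvw : M (Sum.inl v) (Sum.inl w) = 2 := by
    rw [hentry, if_pos (join_dist_eq_two G hvw_ne hvw_nadj)]
  have Mwv : M (Sum.inl w) (Sum.inl v) = 2 := by
    rw [hentry, if_pos (join_dist_eq_two G hvw_ne.symm (fun h => hvw_nadj h.symm))]
  have Mmd : M (Sum.inl m) (Sum.inl d) = 2 := by
    rw [hentry, if_pos (join_dist_eq_two G hmd_ne hmd_nadj)]
  have Mdm : M (Sum.inl d) (Sum.inl m) = 2 := by
    rw [hentry, if_pos (join_dist_eq_two G hmd_ne.symm (fun h => hmd_nadj h.symm))]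
  have Mvm : M (Sum.inl v) (Sum.inl m) = 0 := by
    rw [hentry, if_neg]; rw [join_dist_adj G hvm]; omega
  have Mwm : M (Sum.inl w) (Sum.inl m) = 0 := by
    rw [hentry, if_neg]; rw [join_dist_adj G hmw.symm]; omega
  have Mvd_lb : 0 ≤ M (Sum.inl v) (Sum.inl d) := by rw [hentry]; split <;> norm_num
  have Mvd_ub : M (Sum.inl v) (Sum.inl d) ≤ 2 := by rw [hentry]; split <;> norm_num
  have Mwd_lb : 0 ≤ M (Sum.inl w) (Sum.inl d) := by rw [hentry]; split <;> norm_num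
  have Mwd_ub : M (Sum.inl w) (Sum.inl d) ≤ 2 := by rw [hentry]; split <;> norm_num
  -- the two test vectors
  set x : V ⊕ Unit → ℝ :=
    Pi.single (Sum.inl v) 1 + Pi.single (Sum.inl w) 1 with hx
  set y : V ⊕ Unit → ℝ :=
    Pi.single (Sum.inl m) 1 + Pi.single (Sum.inl d) (1/2) with hy
  have hquad : ∀ (a b c e : V ⊕ Unit) (s t s' t' : ℝ),
      dotProduct (Pi.single a s + Pi.single b t)
        (M.mulVec (Pi.single c s' + Pi.single e t'))
      = s * (M a c * s') + s * (M a e * t') + t * (M b c * s') + t * (M b e * t') := by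
    intro a b c e s t s' t'
    simp [Matrix.mulVec_add, dotProduct_add, add_dotProduct,
      Matrix.mulVec_single, single_dotProduct]
    ring
  have hxx : dotProduct x (M.mulVec x) = 4 := by
    rw [hx, hquad, Mvv, Mvw, Mwv, Mww]; norm_num
  have hyy : dotProduct y (M.mulVec y) = 2 := by
    rw [hy, hquad, Mmm, Mmd, Mdm, Mdd]; norm_num
  have hxy : dotProduct x (M.mulVec y)
      = M (Sum.inl v) (Sum.inl d) * (1/2) + M (Sum.inl w) (Sum.inl d) * (1/2) := by
    rw [hx, hy, hquad, Mvm, Mwm]; ring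
  apply two_le_posEigCount _ x y
  · rw [hxx]; norm_num
  · rw [hxx, hyy, hxy]
    nlinarith [Mvd_lb, Mvd_ub, Mwd_lb, Mwd_ub]
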